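/- Let S be a finite set and Q : (S → ℝ) → ℝ. Then Q is a Dirichlet form on S if and only if Q is the power functional of some circuit of linear resistors with terminal set S; that is, if and only if there exist a circuit of linear resistors (E, N, s, t, r) together with an injection ι : S → N such that for every ψ : S → ℝ, Q(ψ) is the minimum of P(φ) over all potentials φ : N → ℝ with φ∘ι = ψ (this minimum being attained). -/

import Mathlib

open Finset

/-- A Dirichlet form on a finite set `S`: a function of the shape
`ψ ↦ ∑_{i,j} c i j * (ψ i - ψ j)^2` with nonnegative coefficients. -/
def IsDirichletForm {S : Type*} [Fintype S] (Q : (S → ℝ) → ℝ) : Prop :=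
  ∃ c : S → S → ℝ, (∀ i j, 0 ≤ c i j) ∧
    ∀ ψ : S → ℝ, Q ψ = ∑ i, ∑ j, c i j * (ψ i - ψ j) ^ 2



noncomputable def DForm {N : Type*} [Fintype N] (c : N → N → ℝ) (φ : N → ℝ) : ℝ :=
  ∑ i, ∑ j, c i j * (φ i - φ j) ^ 2

lemma minA {T : Type*} [Fintype T] (a : T → ℝ) (ha : ∀ j, 0 ≤ a j) (φ : T → ℝ) :
    (∀ x : ℝ, (∑ j, ∑ k, a j * a k * (φ j - φ k) ^ 2) / (2 * ∑ j, a j)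
        ≤ ∑ j, a j * (x - φ j) ^ 2) ∧
    (∃ x : ℝ, ∑ j, a j * (x - φ j) ^ 2
        = (∑ j, ∑ k, a j * a k * (φ j - φ k) ^ 2) / (2 * ∑ j, a j)) := by
  obtain h0 | hpos := eq_or_lt_of_le (Finset.sum_nonneg (fun j _ => ha j) : (0:ℝ) ≤ ∑ j, a j)
  · have hz : ∀ j, a j = 0 := by
      intro j
      exact (Finset.sum_eq_zero_iff_of_nonneg (fun j _ => ha j)).1 h0.symm j (mem_univ j)
    simp [hz]
  · set B := ∑ j, a j * φ j with hB
    set C := ∑ j, a j * φ j ^ 2 with hC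
    have h1 : ∀ x : ℝ, ∑ j, a j * (x - φ j) ^ 2 = (∑ j, a j) * x ^ 2 - 2 * B * x + C := by
      intro x
      have hc : ∀ j ∈ univ, a j * (x - φ j) ^ 2
          = (a j) * x ^ 2 - ((a j * φ j) * (2 * x)) + a j * φ j ^ 2 := by
        intro j _; ring
      rw [Finset.sum_congr rfl hc, Finset.sum_add_distrib, Finset.sum_sub_distrib,
        ← Finset.sum_mul, ← Finset.sum_mul]
      rw [← hB, ← hC]; ring
    have h2 : ∑ j, ∑ k, a j * a k * (φ j - φ k) ^ 2
        = 2 * ((∑ j, a j) * C - B ^ 2) := by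
      have hc : ∀ j ∈ univ, ∑ k, a j * a k * (φ j - φ k) ^ 2
          = (a j * φ j ^ 2) * (∑ k, a k) - ((2 * (a j * φ j)) * B) + a j * C := by
        intro j _
        have hd : ∀ k ∈ univ, a j * a k * (φ j - φ k) ^ 2
            = (a j * φ j ^ 2) * a k - ((2 * (a j * φ j)) * (a k * φ k)) + a j * (a k * φ k ^ 2) := by
          intro k _; ring
        rw [Finset.sum_congr rfl hd, Finset.sum_add_distrib, Finset.sum_sub_distrib,
          ← Finset.mul_sum, ← Finset.mul_sum, ← Finset.mul_sum]
      rw [Finset.sum_congr rfl hc, Finset.sum_add_distrib, Finset.sum_sub_distrib,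
        ← Finset.sum_mul, ← Finset.sum_mul, ← Finset.sum_mul, ← Finset.mul_sum]
      rw [← hB, ← hC]; ring
    constructor
    · intro x
      rw [h1, h2, div_le_iff₀ (by linarith : (0:ℝ) < 2 * ∑ j, a j)]
      nlinarith [sq_nonneg ((∑ j, a j) * x - B)]
    · refine ⟨B / (∑ j, a j), ?_⟩
      rw [h1, h2]
      have hne : (∑ j, a j) ≠ 0 := ne_of_gt hpos
      field_simp
      ring

lemma elimNodes {S : Type*} [Fintype S] (m : ℕ) :
    ∀ c : (S ⊕ Fin m) → (S ⊕ Fin m) → ℝ, (∀ p q, 0 ≤ c p q) →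
    ∃ c' : S → S → ℝ, (∀ i j, 0 ≤ c' i j) ∧
      ∀ ψ : S → ℝ,
        (∃ φ : Fin m → ℝ, DForm c (Sum.elim ψ φ) = DForm c' ψ) ∧
        (∀ φ : Fin m → ℝ, DForm c' ψ ≤ DForm c (Sum.elim ψ φ)) := by
  induction m with
  | zero =>
    intro c hc
    refine ⟨fun i j => c (.inl i) (.inl j), fun i j => hc _ _, fun ψ => ?_⟩
    have key : ∀ φ : Fin 0 → ℝ,
        DForm c (Sum.elim ψ φ) = DForm (fun i j => c (.inl i) (.inl j)) ψ := by
      intro φ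
      unfold DForm
      simp [Fintype.sum_sum_type]
    exact ⟨⟨Fin.elim0, key _⟩, fun φ => le_of_eq (key φ).symm⟩
  | succ m ih =>
    intro c hc
    set a : S ⊕ Fin m → ℝ :=
      fun j => c (Sum.inr 0) (Sum.map id Fin.succ j) + c (Sum.map id Fin.succ j) (Sum.inr 0)
      with ha_def
    have ha : ∀ j, 0 ≤ a j := fun j => add_nonneg (hc _ _) (hc _ _)
    have hAnn : (0:ℝ) ≤ ∑ j, a j := Finset.sum_nonneg fun j _ => ha j
    set cmid : (S ⊕ Fin m) → (S ⊕ Fin m) → ℝ :=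
      fun j k => c (Sum.map id Fin.succ j) (Sum.map id Fin.succ k)
            + (a j * a k) / (2 * ∑ l, a l) with hcmid
    have hmidnn : ∀ j k, 0 ≤ cmid j k := fun j k =>
      add_nonneg (hc _ _) (div_nonneg (mul_nonneg (ha j) (ha k)) (by linarith))
    have hsum : ∀ f : S ⊕ Fin (m+1) → ℝ,
        ∑ p, f p = f (Sum.inr 0) + ∑ j, f (Sum.map id Fin.succ j) := by
      intro f
      rw [Fintype.sum_sum_type, Fintype.sum_sum_type, Fin.sum_univ_succ]
      simp only [Sum.map_inl, Sum.map_inr, id]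
      ring
    have hsplit : ∀ (x : ℝ) (Φ' : S ⊕ Fin m → ℝ),
        DForm c (Sum.elim (fun s => Φ' (.inl s)) (Fin.cons x (fun k => Φ' (.inr k))))
          = (∑ j, a j * (x - Φ' j) ^ 2)
            + DForm (fun j k => c (Sum.map id Fin.succ j) (Sum.map id Fin.succ k)) Φ' := by
      intro x Φ'
      set Φ : S ⊕ Fin (m+1) → ℝ :=
        Sum.elim (fun s => Φ' (.inl s)) (Fin.cons x (fun k => Φ' (.inr k))) with hΦ
      have hΦv : Φ (Sum.inr 0) = x := by simp [hΦ]
      have hΦe : ∀ j, Φ (Sum.map id Fin.succ j) = Φ' j := by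
        intro j
        cases j with
        | inl s => rfl
        | inr k => simp [hΦ]
      unfold DForm
      simp only [hsum]
      simp only [hΦv, hΦe, sub_self]
      rw [Finset.sum_add_distrib]
      have hh : ∑ j, a j * (x - Φ' j) ^ 2
          = ∑ j, c (Sum.inr 0) (Sum.map id Fin.succ j) * (x - Φ' j) ^ 2
            + ∑ j, c (Sum.map id Fin.succ j) (Sum.inr 0) * (Φ' j - x) ^ 2 := by
        rw [← Finset.sum_add_distrib]
        refine Finset.sum_congr rfl fun j _ => ?_
        simp only [ha_def]
        ring
      rw [hh]
      ring
    have hMsplit : ∀ Φ' : S ⊕ Fin m → ℝ, DForm cmid Φ'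
        = (∑ j, ∑ k, a j * a k * (Φ' j - Φ' k) ^ 2) / (2 * ∑ l, a l)
          + DForm (fun j k => c (Sum.map id Fin.succ j) (Sum.map id Fin.succ k)) Φ' := by
      intro Φ'
      unfold DForm
      rw [Finset.sum_div, ← Finset.sum_add_distrib]
      refine Finset.sum_congr rfl fun j _ => ?_
      rw [Finset.sum_div, ← Finset.sum_add_distrib]
      refine Finset.sum_congr rfl fun k _ => ?_
      simp only [hcmid]
      ring
    obtain ⟨c', hc', hmin⟩ := ih cmid hmidnn
    refine ⟨c', hc', fun ψ => ?_⟩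
    obtain ⟨⟨φ', hφ'⟩, hlb⟩ := hmin ψ
    constructor
    · obtain ⟨x, hx⟩ := (minA a ha (Sum.elim ψ φ')).2
      refine ⟨Fin.cons x φ', ?_⟩
      have hEq : Sum.elim ψ (Fin.cons x φ')
          = Sum.elim (fun s => Sum.elim ψ φ' (.inl s))
              (Fin.cons x (fun k => Sum.elim ψ φ' (.inr k))) := by
        funext p; cases p <;> rfl
      rw [hEq, hsplit x (Sum.elim ψ φ'), hx, ← hMsplit, hφ']
    · intro φ
      set Φ' : S ⊕ Fin m → ℝ := Sum.elim ψ (fun k => φ k.succ) with hΦ'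
      have hdec : Sum.elim ψ φ
          = Sum.elim (fun s => Φ' (.inl s))
              (Fin.cons (φ 0) (fun k => Φ' (.inr k))) := by
        funext p
        cases p with
        | inl s => rfl
        | inr k =>
          simp only [Sum.elim_inr]
          exact congrFun (Fin.cons_self_tail φ).symm k
      rw [hdec, hsplit]
      calc DForm c' ψ ≤ DForm cmid Φ' := hΦ' ▸ hlb (fun k => φ k.succ)
        _ ≤ _ := by
            rw [hMsplit]
            exact add_le_add ((minA a ha _).1 (φ 0)) le_rfl



lemma fwdKey {S : Type*} [Fintype S] (c : S → S → ℝ) {n M : ℕ}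
    (eS : S ≃ Fin n) (eE : (S × S) ≃ Fin M)
    (st tt : Fin M → Fin n) (r : Fin M → ℝ)
    (hst : ∀ p : S × S, st (eE p) = eS p.1)
    (htt : ∀ p : S × S, tt (eE p) = if c p.1 p.2 = 0 then eS p.1 else eS p.2)
    (hr : ∀ p : S × S, r (eE p) = if c p.1 p.2 = 0 then 1 else 1 / (2 * c p.1 p.2))
    (ψ : S → ℝ) (φ : Fin n → ℝ) (hφ : ∀ x, φ (eS x) = ψ x) :
    (1 / 2) * ∑ e, (1 / r e) * (φ (tt e) - φ (st e)) ^ 2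
      = ∑ i, ∑ j, c i j * (ψ i - ψ j) ^ 2 := by
  rw [Finset.mul_sum, ← Equiv.sum_comp eE
    (fun e => (1 / 2) * ((1 / r e) * (φ (tt e) - φ (st e)) ^ 2))]
  rw [Fintype.sum_prod_type]
  refine Finset.sum_congr rfl fun i _ => Finset.sum_congr rfl fun j _ => ?_
  rw [hst (i, j), htt (i, j), hr (i, j)]
  by_cases h : c i j = 0
  · simp [h]
  · simp only [h, if_false, hφ, one_div_one_div]
    field_simp
    ring

/-- `Q : (S → ℝ) → ℝ` is a Dirichlet form if and only if it is the
power functional of some circuit of linear resistors with terminal set `S`: there are a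
circuit (edges `Fin nE`, nodes `Fin nN`, source `s`, target `t`, resistances `r > 0`)
and an injection `ι : S → Fin nN` such that for every `ψ`, `Q ψ` is the attained minimum
of the extended power functional over all potentials `φ` with `φ ∘ ι = ψ`. -/
theorem statement7 {S : Type*} [Fintype S] (Q : (S → ℝ) → ℝ) :
    IsDirichletForm Q ↔
      ∃ (nE nN : ℕ) (s t : Fin nE → Fin nN) (r : Fin nE → ℝ) (ι : S → Fin nN),
        (∀ e, 0 < r e) ∧ Function.Injective ι ∧
        ∀ ψ : S → ℝ,
          (∃ φ : Fin nN → ℝ, (∀ x, φ (ι x) = ψ x) ∧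
            (1 / 2) * ∑ e, (1 / r e) * (φ (t e) - φ (s e)) ^ 2 = Q ψ) ∧
          ∀ φ : Fin nN → ℝ, (∀ x, φ (ι x) = ψ x) →
            Q ψ ≤ (1 / 2) * ∑ e, (1 / r e) * (φ (t e) - φ (s e)) ^ 2 := by
  classical
  constructor
  · rintro ⟨c, hc, hQ⟩
    have eS : S ≃ Fin (Fintype.card S) := Fintype.equivFin S
    have eE : (S × S) ≃ Fin (Fintype.card (S × S)) := Fintype.equivFin (S × S)
    set st : Fin (Fintype.card (S × S)) → Fin (Fintype.card S) :=
      fun e => eS (eE.symm e).1 with hst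
    set tt : Fin (Fintype.card (S × S)) → Fin (Fintype.card S) :=
      fun e => if c (eE.symm e).1 (eE.symm e).2 = 0 then eS (eE.symm e).1 else eS (eE.symm e).2
      with htt
    set r : Fin (Fintype.card (S × S)) → ℝ :=
      fun e => if c (eE.symm e).1 (eE.symm e).2 = 0 then 1
        else 1 / (2 * c (eE.symm e).1 (eE.symm e).2) with hrd
    have hrpos : ∀ e, 0 < r e := by
      intro e
      rw [hrd]
      dsimp only
      split
      · exact one_pos
      · rename_i h
        have : 0 < c (eE.symm e).1 (eE.symm e).2 := lt_of_le_of_ne (hc _ _) (Ne.symm h)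
        positivity
    refine ⟨_, _, st, tt, r, eS, hrpos, eS.injective, fun ψ => ?_⟩
    have key : ∀ φ : Fin (Fintype.card S) → ℝ, (∀ x, φ (eS x) = ψ x) →
        (1 / 2) * ∑ e, (1 / r e) * (φ (tt e) - φ (st e)) ^ 2 = Q ψ := by
      intro φ hφ
      rw [hQ ψ]
      refine fwdKey c eS eE st tt r ?_ ?_ ?_ ψ φ hφ <;>
        intro p <;> simp [hst, htt, hrd]
    have hconstr : ∀ x, (fun y => ψ (eS.symm y)) (eS x) = ψ x := by
      intro x
      simp only [Equiv.symm_apply_apply]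
    exact ⟨⟨fun y => ψ (eS.symm y), hconstr, key (fun y => ψ (eS.symm y)) hconstr⟩,
      fun (φ : Fin (Fintype.card S) → ℝ) hφ => le_of_eq (key φ hφ).symm⟩
  · rintro ⟨nE, nN, s, t, r, ι, hr, hι, hQ⟩
    set cnode : Fin nN → Fin nN → ℝ := fun i j =>
      ∑ e, (if t e = i then (1:ℝ) else 0) * (if s e = j then 1 else 0) * (1 / (2 * r e))
      with hcnode
    have hcnn : ∀ i j, 0 ≤ cnode i j := by
      intro i j
      refine Finset.sum_nonneg fun e _ => ?_
      have := hr e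
      refine mul_nonneg (mul_nonneg ?_ ?_) (by positivity) <;> split <;> norm_num
    have hrep : ∀ φ : Fin nN → ℝ,
        DForm cnode φ = (1/2) * ∑ e, (1 / r e) * (φ (t e) - φ (s e)) ^ 2 := by
      intro φ
      unfold DForm
      calc ∑ i, ∑ j, cnode i j * (φ i - φ j) ^ 2
          = ∑ i, ∑ j, ∑ e, ((if t e = i then (1:ℝ) else 0) * (if s e = j then 1 else 0)
              * (1/(2 * r e))) * (φ i - φ j) ^ 2 := by
            simp [hcnode, Finset.sum_mul]
        _ = ∑ i, ∑ e, ∑ j, ((if t e = i then (1:ℝ) else 0) * (if s e = j then 1 else 0)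
              * (1/(2 * r e))) * (φ i - φ j) ^ 2 :=
            Finset.sum_congr rfl fun i _ => Finset.sum_comm
        _ = ∑ e, ∑ i, ∑ j, ((if t e = i then (1:ℝ) else 0) * (if s e = j then 1 else 0)
              * (1/(2 * r e))) * (φ i - φ j) ^ 2 := Finset.sum_comm
        _ = (1/2) * ∑ e, (1/r e) * (φ (t e) - φ (s e)) ^ 2 := by
            rw [Finset.mul_sum]
            refine Finset.sum_congr rfl fun e _ => ?_
            simp only [ite_mul, one_mul, zero_mul, Finset.sum_ite_eq, Finset.mem_univ, if_true,
              Finset.sum_ite_eq']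
            have := (hr e).ne'
            field_simp
            simp only [Finset.sum_ite_irrel, Finset.sum_const_zero, Finset.sum_ite_eq, Finset.mem_univ, if_true]
            field_simp
    -- transport along an equivalence Fin nN ≃ S ⊕ Fin mT
    set T := {x : Fin nN // x ∉ Set.range ι} with hT
    set e' : S ⊕ Fin (Fintype.card T) ≃ Fin nN :=
      ((Equiv.refl S).sumCongr (Fintype.equivFin T).symm).trans
        (((Equiv.ofInjective ι hι).sumCongr (Equiv.refl T)).trans
          (Equiv.sumCompl (· ∈ Set.range ι))) with he'
    have he'l : ∀ x : S, e' (Sum.inl x) = ι x := by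
      intro x
      simp [he', Equiv.sumCompl]
    set c2 : (S ⊕ Fin (Fintype.card T)) → (S ⊕ Fin (Fintype.card T)) → ℝ :=
      fun j k => cnode (e' j) (e' k) with hc2
    have hc2nn : ∀ j k, 0 ≤ c2 j k := fun j k => hcnn _ _
    have htrans : ∀ φ : Fin nN → ℝ, DForm c2 (fun p => φ (e' p)) = DForm cnode φ := by
      intro φ
      unfold DForm
      rw [← Equiv.sum_comp e' (fun i => ∑ j, cnode i j * (φ i - φ j) ^ 2)]
      refine Finset.sum_congr rfl fun p _ => ?_
      rw [← Equiv.sum_comp e' (fun j => cnode (e' p) j * (φ (e' p) - φ j) ^ 2)]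
    obtain ⟨c', hc', hmin⟩ := elimNodes (Fintype.card T) c2 hc2nn
    refine ⟨c', hc', fun ψ => ?_⟩
    obtain ⟨⟨φ₀, hφ₀c, hφ₀v⟩, hQlb⟩ := hQ ψ
    obtain ⟨⟨φ₁, hφ₁⟩, hlb⟩ := hmin ψ
    have h1 : Q ψ ≤ DForm c' ψ := by
      set φ₁' : Fin nN → ℝ := fun y => Sum.elim ψ φ₁ (e'.symm y) with hφ₁'
      have hcomp : (fun p => φ₁' (e' p)) = Sum.elim ψ φ₁ := by
        funext p; simp [hφ₁']
      have hval : (1 / 2) * ∑ e, (1 / r e) * (φ₁' (t e) - φ₁' (s e)) ^ 2 = DForm c' ψ := by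
        rw [← hrep, ← htrans, hcomp, hφ₁]
      have hconstr : ∀ x, φ₁' (ι x) = ψ x := by
        intro x
        have hx : e'.symm (ι x) = Sum.inl x := by rw [← he'l x, Equiv.symm_apply_apply]
        simp only [hφ₁', hx, Sum.elim_inl]
      calc Q ψ ≤ (1 / 2) * ∑ e, (1 / r e) * (φ₁' (t e) - φ₁' (s e)) ^ 2 := hQlb φ₁' hconstr
        _ = DForm c' ψ := hval
    have h2 : DForm c' ψ ≤ Q ψ := by
      have hcomp : Sum.elim ψ (fun k => φ₀ (e' (Sum.inr k))) = fun p => φ₀ (e' p) := by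
        funext p
        cases p with
        | inl x => simp [he'l x, hφ₀c x]
        | inr k => rfl
      calc DForm c' ψ ≤ DForm c2 (Sum.elim ψ (fun k => φ₀ (e' (Sum.inr k)))) := hlb _
        _ = DForm cnode φ₀ := by rw [hcomp, htrans]
        _ = Q ψ := by rw [hrep, hφ₀v]
    rw [show (∑ i, ∑ j, c' i j * (ψ i - ψ j) ^ 2) = DForm c' ψ from rfl]
    exact le_antisymm h1 h2
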